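/- Let A, B be n×n real symmetric positive definite matrices. Then λ_k(A, B) ≤ λ_k(𝓛(A), B) for all k = 1, …, n; that is, lumping the first matrix of the pencil leads to an overestimate of every generalized eigenvalue. -/

import Mathlib

open Matrix

/-- The Euclidean norm of a vector. -/
noncomputable def enorm {m : Type*} [Fintype m] (v : m → ℝ) : ℝ :=
  Real.sqrt (∑ i, (v i) ^ 2)

/-- The square root of a positive semidefinite matrix, as `Matrix.PosSemidef.sqrt` was defined
in the older Mathlib: `U * diagonal (√ ∘ eigenvalues) * U⋆`. -/
noncomputable def oldPSDSqrt {m : Type*} [Fintype m] [DecidableEq m] {A : Matrix m m ℝ}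
    (hA : A.PosSemidef) : Matrix m m ℝ :=
  hA.1.eigenvectorUnitary.1 * diagonal ((↑) ∘ Real.sqrt ∘ hA.1.eigenvalues) *
    (star hA.1.eigenvectorUnitary : Matrix m m ℝ)

theorem oldPSDSqrt_isHermitian {m : Type*} [Fintype m] [DecidableEq m] {A : Matrix m m ℝ}
    (hA : A.PosSemidef) : (oldPSDSqrt hA).IsHermitian := by
  unfold oldPSDSqrt
  simp only [IsHermitian, conjTranspose_mul, diagonal_conjTranspose, star_trivial, Matrix.mul_assoc]
  rw [← star_eq_conjTranspose, ← star_eq_conjTranspose, star_star]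

/-- The `k`-th smallest generalized eigenvalue (counted with multiplicity) of the
symmetric pencil `(A, B)` with `B` positive definite, i.e. the `k`-th smallest root of
`det (A - λ B) = 0`.  It is defined as the `k`-th smallest eigenvalue of the Hermitian
matrix `√(B⁻¹) * A * √(B⁻¹)`, which is similar to `B⁻¹ * A`.  Junk value `0` is returned
if `A` is not symmetric or `B` is not positive definite. -/
noncomputable def genEig {m : Type*} [Fintype m] [DecidableEq m]
    (A B : Matrix m m ℝ) (k : Fin (Fintype.card m)) : ℝ :=
  letI := Classical.propDecidable
  if h : A.IsHermitian ∧ B.PosDef then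
    let S : Matrix m m ℝ := oldPSDSqrt (h.2.inv).posSemidef
    have hS : S.IsHermitian := oldPSDSqrt_isHermitian (h.2.inv).posSemidef
    have hC : (S * A * S).IsHermitian := by
      show (S * A * S)ᴴ = S * A * S
      rw [conjTranspose_mul, conjTranspose_mul, hS.eq, h.1.eq, Matrix.mul_assoc]
    let f : Fin (Fintype.card m) → ℝ := hC.eigenvalues₀
    f (Tuple.sort f k)
  else 0

/-- The `k`-th smallest generalized eigenvalue of a pencil of `n × n` matrices,
indexed by `Fin n`.  `genEigFin A B 0` is the smallest one, `λ_1(A,B)`, and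
`genEigFin A B (Fin.last _)` is the largest one, `λ_n(A,B)`. -/
noncomputable def genEigFin {n : ℕ} (A B : Matrix (Fin n) (Fin n) ℝ) (k : Fin n) : ℝ :=
  genEig A B (Fin.cast (Fintype.card_fin n).symm k)

/-- The (row-sum) lumping operator: `lump B` is the diagonal matrix whose `i`-th
diagonal entry is the sum of the absolute values of the entries of the `i`-th row of `B`. -/
noncomputable def lump {m : Type*} [Fintype m] [DecidableEq m]
    (B : Matrix m m ℝ) : Matrix m m ℝ :=
  Matrix.diagonal fun i => ∑ j, |B i j|

/-- The banded part `D_i` of a matrix: it keeps all sub- and super-diagonals of index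
smaller than `i` (i.e. the entries with `|j - k| < i`) and sets the rest to zero. -/
def diagBand {n : ℕ} (B : Matrix (Fin n) (Fin n) ℝ) (i : ℕ) : Matrix (Fin n) (Fin n) ℝ :=
  Matrix.of fun j k => if |((j : ℕ) : ℤ) - ((k : ℕ) : ℤ)| < (i : ℤ) then B j k else 0

/-- The lumped preconditioner `P_i = D_i + 𝓛(R_i)` where `B = D_i + R_i`, `D_i` being the
banded part of `B` of bandwidth `i` and `R_i` the remainder. -/
noncomputable def precond {n : ℕ} (B : Matrix (Fin n) (Fin n) ℝ) (i : ℕ) :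
    Matrix (Fin n) (Fin n) ℝ :=
  diagBand B i + lump (B - diagBand B i)


section Aux

set_option linter.unusedSectionVars false
set_option maxHeartbeats 1000000

variable {m : Type*} [Fintype m] [DecidableEq m]

lemma quad_eq {M : Matrix m m ℝ} (hM : M.IsHermitian) (x : EuclideanSpace ℝ m) :
    (x : m → ℝ) ⬝ᵥ (M *ᵥ x) = ∑ j, hM.eigenvalues j * (hM.eigenvectorBasis.repr x j)^2 := by
  set U : Matrix m m ℝ := (hM.eigenvectorUnitary : Matrix m m ℝ)
  have hy : ∀ j, (star U *ᵥ (x : m → ℝ)) j = hM.eigenvectorBasis.repr x j := by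
    intro j
    rw [OrthonormalBasis.repr_apply_apply]
    simp [mulVec, dotProduct, star_apply, PiLp.inner_apply, U, Matrix.conjTranspose_apply,
      mul_comm]
  conv_lhs => rw [hM.spectral_theorem, Unitary.conjStarAlgAut_apply]
  rw [← mulVec_mulVec, ← mulVec_mulVec, dotProduct_mulVec]
  have hv : vecMul (x : m → ℝ) U = star U *ᵥ (x : m → ℝ) := by
    ext j
    simp [vecMul, mulVec, dotProduct, Matrix.conjTranspose_apply, mul_comm]
  rw [hv, dotProduct_mulVec]
  have hv2 : vecMul (star U *ᵥ (x : m → ℝ)) (diagonal (RCLike.ofReal ∘ hM.eigenvalues)) =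
      fun j => hM.eigenvalues j * (star U *ᵥ (x : m → ℝ)) j := by
    ext j
    simp [vecMul_diagonal, mul_comm]
  rw [hv2]
  simp only [dotProduct, hy, show ∀ j, (star (hM.eigenvectorUnitary : Matrix m m ℝ) *ᵥ (x : m → ℝ)) j = hM.eigenvectorBasis.repr x j from hy]
  ring_nf

lemma norm_sq_eq (b : OrthonormalBasis m ℝ (EuclideanSpace ℝ m)) (x : EuclideanSpace ℝ m) :
    ‖x‖^2 = ∑ j, (b.repr x j)^2 := by
  rw [← b.repr.norm_map x, EuclideanSpace.norm_eq, Real.sq_sqrt (by positivity)]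
  simp [sq_abs]

lemma repr_zero_off {M : Matrix m m ℝ} (hM : M.IsHermitian) (s : Finset m)
    {x : EuclideanSpace ℝ m}
    (hx : x ∈ Submodule.span ℝ (hM.eigenvectorBasis '' (s : Set m)))
    {j : m} (hj : j ∉ s) : hM.eigenvectorBasis.repr x j = 0 := by
  rw [OrthonormalBasis.repr_apply_apply]
  induction hx using Submodule.span_induction with
  | mem y hy =>
    obtain ⟨i, his, rfl⟩ := hy
    exact hM.eigenvectorBasis.orthonormal.2 (fun h => hj (h ▸ his))
  | zero => simp
  | add y z _ _ hy hz => rw [inner_add_right, hy, hz, add_zero]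
  | smul a y _ hy => rw [inner_smul_right, hy, mul_zero]

lemma finrank_span_basis_image (b : OrthonormalBasis m ℝ (EuclideanSpace ℝ m)) (s : Finset m) :
    Module.finrank ℝ (Submodule.span ℝ (b '' (s : Set m))) = s.card := by
  have hli : LinearIndependent ℝ (fun i : s => b i) :=
    b.orthonormal.linearIndependent.comp _ Subtype.val_injective
  have : Set.range (fun i : s => b i) = b '' (s : Set m) := by
    ext y; simp
  rw [← this, finrank_span_eq_card hli, Fintype.card_coe]

lemma quad_ge {M : Matrix m m ℝ} (hM : M.IsHermitian) (s : Finset m) (c : ℝ)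
    (hc : ∀ j ∈ s, c ≤ hM.eigenvalues j) {x : EuclideanSpace ℝ m}
    (hx : x ∈ Submodule.span ℝ (hM.eigenvectorBasis '' (s : Set m))) :
    c * ‖x‖^2 ≤ (x : m → ℝ) ⬝ᵥ (M *ᵥ x) := by
  rw [quad_eq hM x, norm_sq_eq hM.eigenvectorBasis x, Finset.mul_sum, ← sub_nonneg,
    ← Finset.sum_sub_distrib]
  refine Finset.sum_nonneg fun j _ => ?_
  by_cases hj : j ∈ s
  · have := hc j hj
    nlinarith [sq_nonneg (hM.eigenvectorBasis.repr x j)]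
  · rw [repr_zero_off hM s hx hj]; ring_nf; exact le_refl 0

lemma quad_le {M : Matrix m m ℝ} (hM : M.IsHermitian) (s : Finset m) (c : ℝ)
    (hc : ∀ j ∈ s, hM.eigenvalues j ≤ c) {x : EuclideanSpace ℝ m}
    (hx : x ∈ Submodule.span ℝ (hM.eigenvectorBasis '' (s : Set m))) :
    (x : m → ℝ) ⬝ᵥ (M *ᵥ x) ≤ c * ‖x‖^2 := by
  rw [quad_eq hM x, norm_sq_eq hM.eigenvectorBasis x, Finset.mul_sum, ← sub_nonneg,
    ← Finset.sum_sub_distrib]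
  refine Finset.sum_nonneg fun j _ => ?_
  by_cases hj : j ∈ s
  · have := hc j hj
    nlinarith [sq_nonneg (hM.eigenvectorBasis.repr x j)]
  · rw [repr_zero_off hM s hx hj]; ring_nf; exact le_refl 0

lemma exists_inter (V W : Submodule ℝ (EuclideanSpace ℝ m))
    (h : Fintype.card m < Module.finrank ℝ V + Module.finrank ℝ W) :
    ∃ x : EuclideanSpace ℝ m, x ≠ 0 ∧ x ∈ V ⊓ W := by
  have h1 := Submodule.finrank_sup_add_finrank_inf_eq V W
  have h2 : Module.finrank ℝ (V ⊔ W : Submodule ℝ (EuclideanSpace ℝ m)) ≤ Fintype.card m := by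
    simpa [finrank_euclideanSpace] using (V ⊔ W).finrank_le
  have h3 : 0 < Module.finrank ℝ (V ⊓ W : Submodule ℝ (EuclideanSpace ℝ m)) := by omega
  rw [Module.finrank_pos_iff] at h3
  obtain ⟨⟨x, hx⟩, hne⟩ := exists_ne (0 : (V ⊓ W : Submodule ℝ (EuclideanSpace ℝ m)))
  exact ⟨x, by simpa [Submodule.mk_eq_zero] using hne, hx⟩

lemma sorted_eig_mono {M N : Matrix m m ℝ} (hM : M.IsHermitian) (hN : N.IsHermitian)
    (hMN : (N - M).PosSemidef) (k : Fin (Fintype.card m)) :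
    hM.eigenvalues₀ (Tuple.sort hM.eigenvalues₀ k) ≤
      hN.eigenvalues₀ (Tuple.sort hN.eigenvalues₀ k) := by
  classical
  set e : Fin (Fintype.card m) ≃ m := Fintype.equivOfCardEq (Fintype.card_fin _) with he
  set f := hM.eigenvalues₀ with hf
  set g := hN.eigenvalues₀ with hg
  set σ := Tuple.sort f
  set τ := Tuple.sort g
  have hev_f : ∀ i : Fin (Fintype.card m), hM.eigenvalues (e i) = f i := by
    intro i; rw [hf]; show hM.eigenvalues₀ (e.symm (e i)) = _; rw [e.symm_apply_apply]
  have hev_g : ∀ i : Fin (Fintype.card m), hN.eigenvalues (e i) = g i := by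
    intro i; rw [hg]; show hN.eigenvalues₀ (e.symm (e i)) = _; rw [e.symm_apply_apply]
  set sV : Finset m := (Finset.Ici k).image (fun i => e (σ i)) with hsV
  set sW : Finset m := (Finset.Iic k).image (fun i => e (τ i)) with hsW
  set V := Submodule.span ℝ (hM.eigenvectorBasis '' (sV : Set m))
  set W := Submodule.span ℝ (hN.eigenvectorBasis '' (sW : Set m))
  have hinj : ∀ (π : Equiv.Perm (Fin (Fintype.card m))),
      Function.Injective (fun i => e (π i)) :=
    fun π a b hab => π.injective (e.injective hab)
  have hcV : sV.card = Fintype.card m - k := by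
    rw [hsV, Finset.card_image_of_injective _ (hinj σ), Fin.card_Ici]
  have hcW : sW.card = k + 1 := by
    rw [hsW, Finset.card_image_of_injective _ (hinj τ), Fin.card_Iic]
  obtain ⟨x, hx0, hxV, hxW⟩ : ∃ x : EuclideanSpace ℝ m, x ≠ 0 ∧ x ∈ V ∧ x ∈ W := by
    obtain ⟨x, hx0, hx⟩ := exists_inter V W (by
      rw [finrank_span_basis_image, finrank_span_basis_image, hcV, hcW]
      have := k.isLt; omega)
    exact ⟨x, hx0, hx.1, hx.2⟩
  have hQM : f (σ k) * ‖x‖^2 ≤ (x : m → ℝ) ⬝ᵥ (M *ᵥ x) := by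
    refine quad_ge hM sV _ ?_ hxV
    intro j hj
    rw [hsV, Finset.mem_image] at hj
    obtain ⟨i, hi, rfl⟩ := hj
    rw [hev_f]
    exact Tuple.monotone_sort f (Finset.mem_Ici.mp hi)
  have hQN : (x : m → ℝ) ⬝ᵥ (N *ᵥ x) ≤ g (τ k) * ‖x‖^2 := by
    refine quad_le hN sW _ ?_ hxW
    intro j hj
    rw [hsW, Finset.mem_image] at hj
    obtain ⟨i, hi, rfl⟩ := hj
    rw [hev_g]
    exact Tuple.monotone_sort g (Finset.mem_Iic.mp hi)
  have hMN' : (x : m → ℝ) ⬝ᵥ (M *ᵥ x) ≤ (x : m → ℝ) ⬝ᵥ (N *ᵥ x) := by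
    have h := hMN.dotProduct_mulVec_nonneg (x : m → ℝ)
    rw [show star (x : m → ℝ) = (x : m → ℝ) from funext fun i => star_trivial _] at h
    rw [sub_mulVec, dotProduct_sub, sub_nonneg] at h
    exact h
  have hxpos : 0 < ‖x‖^2 := pow_pos (norm_pos_iff.mpr hx0) 2
  have := hQM.trans (hMN'.trans hQN)
  exact le_of_mul_le_mul_right (by linarith) hxpos

lemma lump_isHermitian (A : Matrix m m ℝ) : (lump A).IsHermitian := by
  unfold lump
  exact isHermitian_diagonal _

lemma lump_sub_posSemidef {A : Matrix m m ℝ} (hA : A.IsHermitian) :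
    (lump A - A).PosSemidef := by
  refine PosSemidef.of_dotProduct_mulVec_nonneg ?_ ?_
  · exact (lump_isHermitian A).sub hA
  · intro x
    rw [show (star x : m → ℝ) = x from funext fun i => star_trivial _]
    rw [sub_mulVec, dotProduct_sub, sub_nonneg]
    have hlhs : x ⬝ᵥ (A *ᵥ x) = ∑ i, ∑ j, A i j * (x i * x j) := by
      simp only [dotProduct, mulVec, dotProduct, Finset.mul_sum]
      exact Finset.sum_congr rfl fun i _ => Finset.sum_congr rfl fun j _ => by ring
    have hrhs : x ⬝ᵥ (lump A *ᵥ x) = ∑ i, ∑ j, |A i j| * (x i * x i) := by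
      unfold lump
      simp only [dotProduct, mulVec_diagonal, Finset.sum_mul, Finset.mul_sum]
      exact Finset.sum_congr rfl fun i _ => Finset.sum_congr rfl fun j _ => by ring
    rw [hlhs, hrhs, ← sub_nonneg, ← Finset.sum_sub_distrib]
    simp only [← Finset.sum_sub_distrib]
    set t : m → m → ℝ := fun i j => |A i j| * (x i * x i) - A i j * (x i * x j) with ht
    have hsymm : ∀ i j, A j i = A i j := fun i j => by
      have := congrFun (congrFun hA.eq j) i
      simpa using this.symm
    have hkey : ∀ i j, 0 ≤ t i j + t j i := by
      intro i j
      rw [ht]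
      simp only
      rw [hsymm i j]
      nlinarith [mul_nonneg (sub_nonneg.mpr (le_abs_self (A i j))) (sq_nonneg (x i + x j)),
        mul_nonneg (sub_nonneg.mpr (neg_abs_le (A i j))) (sq_nonneg (x i - x j))]
    have h2 : 0 ≤ ∑ i, ∑ j, (t i j + t j i) :=
      Finset.sum_nonneg fun i _ => Finset.sum_nonneg fun j _ => hkey i j
    have h3 : ∑ i, ∑ j, (t i j + t j i) = (∑ i, ∑ j, t i j) + ∑ i, ∑ j, t i j := by
      have hc : (∑ i, ∑ j, t j i) = ∑ i, ∑ j, t i j := Finset.sum_comm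
      calc ∑ i, ∑ j, (t i j + t j i)
          = (∑ i, ∑ j, t i j) + ∑ i, ∑ j, t j i := by
            rw [← Finset.sum_add_distrib]
            exact Finset.sum_congr rfl fun i _ => Finset.sum_add_distrib
        _ = _ := by rw [hc]
    linarith [h3 ▸ h2]

lemma final_ineq {m : Type*} [Fintype m] [inst : DecidableEq m] {A L C : Matrix m m ℝ}
    (hLA : (L - A).PosSemidef) (hC : C.PosSemidef)
    (hC1 : (oldPSDSqrt hC * A * oldPSDSqrt hC).IsHermitian)
    (hC2 : (oldPSDSqrt hC * L * oldPSDSqrt hC).IsHermitian)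
    (k : Fin (Fintype.card m)) :
    hC1.eigenvalues₀ (Tuple.sort hC1.eigenvalues₀ k) ≤
      hC2.eigenvalues₀ (Tuple.sort hC2.eigenvalues₀ k) := by
  refine sorted_eig_mono hC1 hC2 ?_ k
  have h := hLA.mul_mul_conjTranspose_same (oldPSDSqrt hC)
  rw [(oldPSDSqrt_isHermitian hC).eq, Matrix.mul_sub, Matrix.sub_mul] at h
  exact h

end Aux


/-- `λ_k(A, B) ≤ λ_k(𝓛(A), B)` for all `k`. -/
theorem stmt_9 {n : ℕ} (A B : Matrix (Fin n) (Fin n) ℝ)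
    (hA : A.PosDef) (hB : B.PosDef) :
    ∀ k : Fin n, genEigFin A B k ≤ genEigFin (lump A) B k := by
  intro k
  unfold genEigFin genEig
  rw [dif_pos ⟨hA.1, hB⟩, dif_pos ⟨lump_isHermitian A, hB⟩]
  dsimp only
  generalize_proofs hS1 hC1 hS2 hC2
  exact final_ineq (inst := fun a b => Classical.propDecidable (a = b))
    (lump_sub_posSemidef hA.1) hS1 hC1 hC2 _
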